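/- Approximate extremal query via ANN: let ε ∈ (0,1], set δ = ε²/(32−ε)², τ = 32Δ'/ε, where Δ ≤ Δ' ≤ 2Δ and Δ = diam(P). Let q be a point at distance τ from a point p ∈ conv(P) along direction v (unit vector), and let z be a (1+δ)-ANN of q in P. Then for all y ∈ P, ⟨v, y⟩ ≤ ⟨v, z⟩ + εΔ. -/

import Mathlib

open scoped RealInnerProductSpace

lemma key_alg (ε Δ u s : ℝ) (hε0 : 0 < ε) (hε1 : ε ≤ 1) (hΔ : 0 < Δ)
    (hs1 : 31 ≤ s) (hs2 : s ≤ 32) (hu1 : 31 * Δ ≤ u) (hu2 : u ≤ 65 * Δ) :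
    2*s^2*u^2 + ε^2*u^2 + (s^2+ε^2)^2*Δ^2 ≤ 2*s^4*Δ*u + s^4*ε^2*Δ^2 := by
  have hu0 : 0 < u := lt_of_lt_of_le (by positivity) hu1
  have hΔu : 0 < Δ * u := mul_pos hΔ hu0
  have hsl : (961:ℝ) ≤ s^2 := by nlinarith
  have hsu : s^2 ≤ 1024 := by nlinarith
  have hs4l : (923521:ℝ) ≤ s^4 := by nlinarith
  have hu2' : u^2 ≤ 4225 * Δ^2 := by nlinarith
  have hΔΔu : 31 * Δ^2 ≤ Δ * u := by nlinarith
  have h1 : ε^2*u^2 ≤ s^4*ε^2*Δ^2 := by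
    have : (0:ℝ) ≤ ε^2 * (s^4*Δ^2 - u^2) := by
      apply mul_nonneg (sq_nonneg ε); nlinarith [mul_pos hΔ hΔ]
    nlinarith [this]
  have h2 : 2*s^2*u^2 ≤ 133120*(Δ*u) := by nlinarith [sq_nonneg u]
  have ha : s^2+ε^2 ≤ 1025 := by nlinarith [sq_nonneg ε]
  have ha0 : (0:ℝ) ≤ 1025 + (s^2+ε^2) := by positivity
  have hse : (s^2+ε^2)^2 ≤ 1050625 := by nlinarith [mul_nonneg (sub_nonneg.2 ha) ha0]
  have h3 : (s^2+ε^2)^2*Δ^2 ≤ 33892*(Δ*u) := by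
    have := mul_le_mul_of_nonneg_right hse (sq_nonneg Δ)
    linarith
  have h4 : (1847042:ℝ)*(Δ*u) ≤ 2*s^4*Δ*u := by nlinarith
  linarith

lemma sq_le_of_sq {x y : ℝ} (hx : 0 ≤ x) (hy : 0 ≤ y) (h : x^2 ≤ y^2) : x ≤ y := by
  nlinarith

/-- pure-real arithmetic core -/
lemma arith_core (ε Δ Δ' δ τ c dqy dqz ivq ivy ivz : ℝ)
    (hε0 : 0 < ε) (hε1 : ε ≤ 1) (hΔpos : 0 < Δ) (hΔ'1 : Δ ≤ Δ') (hΔ'2 : Δ' ≤ 2 * Δ)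
    (hδ : δ = ε ^ 2 / (32 - ε) ^ 2) (hτε : τ * ε = 32 * Δ') (hτpos : 0 < τ)
    (hcl : -Δ ≤ c) (hcu : c ≤ Δ)
    (f1 : ivq - ivy = τ + c)
    (f2 : dqy ^ 2 ≤ (τ + c) ^ 2 + Δ ^ 2) (hdqy : 0 ≤ dqy)
    (f3 : ivq - ivz ≤ dqz)
    (f4 : dqz ≤ (1 + δ) * dqy) :
    ivy ≤ ivz + ε * Δ := by
  obtain ⟨A, hA⟩ : ∃ A : ℝ, A = τ + c := ⟨_, rfl⟩
  rw [← hA] at f1 f2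
  have hεA : ε * A = 32 * Δ' + ε * c := by rw [hA]; linear_combination hτε
  have hεΔ : ε * Δ ≤ Δ := by nlinarith
  have huA1 : 31 * Δ ≤ ε * A := by
    nlinarith [hεA, mul_nonneg hε0.le (show (0:ℝ) ≤ c + Δ by linarith)]
  have huA2 : ε * A ≤ 65 * Δ := by
    nlinarith [hεA, mul_le_mul_of_nonneg_left hcu hε0.le]
  have hApos : 0 < A := by
    by_contra h
    push_neg at h
    nlinarith [mul_nonneg hε0.le (neg_nonneg.2 h)]
  set s : ℝ := 32 - ε with hs
  have hs1 : (31:ℝ) ≤ s := by rw [hs]; linarith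
  have hs2 : s ≤ 32 := by rw [hs]; linarith
  have hs0 : (0:ℝ) < s := by linarith
  have hkey := key_alg ε Δ (ε * A) s hε0 hε1 hΔpos hs1 hs2 huA1 huA2
  have hkey2 : (s^2 + ε^2)^2 * (A^2 + Δ^2) ≤ s^4 * (A + ε * Δ)^2 := by linear_combination hkey
  have hδ0 : 0 ≤ δ := by rw [hδ]; positivity
  have hδ' : 1 + δ = (s^2 + ε^2) / s^2 := by
    rw [hδ, hs]; exact one_add_div (pow_ne_zero 2 (by linarith : (0:ℝ) < 32 - ε).ne')
  have hfin : (1 + δ)^2 * (A^2 + Δ^2) ≤ (A + ε * Δ)^2 := by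
    rw [hδ', div_pow, div_mul_eq_mul_div, div_le_iff₀ (by positivity)]
    calc (s^2 + ε^2)^2 * (A^2 + Δ^2) ≤ s^4 * (A + ε * Δ)^2 := hkey2
    _ = (A + ε * Δ)^2 * (s^2)^2 := by ring
  have hεΔpos : 0 < ε * Δ := mul_pos hε0 hΔpos
  have hAε : 0 ≤ A + ε * Δ := by linarith
  have h6 : ((1 + δ) * dqy)^2 ≤ (A + ε * Δ)^2 := by
    calc ((1 + δ) * dqy)^2 = (1 + δ)^2 * dqy^2 := by ring
    _ ≤ (1 + δ)^2 * (A^2 + Δ^2) := mul_le_mul_of_nonneg_left f2 (by positivity)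
    _ ≤ (A + ε * Δ)^2 := hfin
  have h0 : 0 ≤ (1 + δ) * dqy := mul_nonneg (by linarith) hdqy
  have h7 : (1 + δ) * dqy ≤ A + ε * Δ := sq_le_of_sq h0 hAε h6
  linarith

/-- approximate extremal query via ANN: with `δ = ε²/(32−ε)²`,
`τ = 32Δ'/ε`, `Δ ≤ Δ' ≤ 2Δ`, `q = p + τ·v` for `p ∈ conv(P)` and unit `v`, a
`(1+δ)`-ANN `z` of `q` in `P` is `ε`-extremal: `⟨v,y⟩ ≤ ⟨v,z⟩ + εΔ` for all `y ∈ P`. -/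
theorem ann_extremal_query {d : ℕ} (P : Finset (EuclideanSpace ℝ (Fin d)))
    (hP : P.Nonempty) (ε Δ Δ' δ τ : ℝ) (hε0 : 0 < ε) (hε1 : ε ≤ 1)
    (hΔ : Δ = Metric.diam (P : Set (EuclideanSpace ℝ (Fin d)))) (hΔpos : 0 < Δ)
    (hΔ'1 : Δ ≤ Δ') (hΔ'2 : Δ' ≤ 2 * Δ)
    (hδ : δ = ε ^ 2 / (32 - ε) ^ 2) (hτ : τ = 32 * Δ' / ε)
    (v p q z : EuclideanSpace ℝ (Fin d)) (hv : ‖v‖ = 1)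
    (hp : p ∈ convexHull ℝ (P : Set (EuclideanSpace ℝ (Fin d))))
    (hq : q = p + τ • v) (hzP : z ∈ P)
    (hz : dist q z ≤ (1 + δ) * Metric.infDist q (P : Set (EuclideanSpace ℝ (Fin d)))) :
    ∀ y ∈ P, ⟪v, y⟫ ≤ ⟪v, z⟫ + ε * Δ := by
  intro y hy
  have hyP : y ∈ (P : Set (EuclideanSpace ℝ (Fin d))) := hy
  have hεne : ε ≠ 0 := ne_of_gt hε0
  have hΔ'pos : 0 < Δ' := lt_of_lt_of_le hΔpos hΔ'1
  have hτpos : 0 < τ := by rw [hτ]; exact div_pos (by linarith) hε0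
  have hτε : τ * ε = 32 * Δ' := by rw [hτ]; field_simp
  -- distance from p to y
  have hbdd : Bornology.IsBounded (convexHull ℝ (P : Set (EuclideanSpace ℝ (Fin d)))) :=
    isBounded_convexHull.2 (P.finite_toSet.isBounded)
  have hpy : ‖p - y‖ ≤ Δ := by
    rw [← dist_eq_norm, hΔ, ← convexHull_diam]
    exact Metric.dist_le_diam_of_mem hbdd hp (subset_convexHull ℝ _ hyP)
  obtain ⟨c, hc⟩ : ∃ c : ℝ, ⟪v, p - y⟫ = c := ⟨_, rfl⟩
  have hcb : |c| ≤ Δ := by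
    rw [← hc]
    calc |⟪v, p - y⟫| ≤ ‖v‖ * ‖p - y‖ := abs_real_inner_le_norm v (p - y)
    _ ≤ Δ := by rw [hv, one_mul]; exact hpy
  have hqy' : q - y = (p - y) + τ • v := by rw [hq]; abel
  -- opaque reals
  obtain ⟨ivq, hivq⟩ : ∃ r : ℝ, ⟪v, q⟫ = r := ⟨_, rfl⟩
  obtain ⟨ivy, hivy⟩ : ∃ r : ℝ, ⟪v, y⟫ = r := ⟨_, rfl⟩
  obtain ⟨ivz, hivz⟩ : ∃ r : ℝ, ⟪v, z⟫ = r := ⟨_, rfl⟩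
  obtain ⟨dqy, hdqy'⟩ : ∃ r : ℝ, dist q y = r := ⟨_, rfl⟩
  obtain ⟨dqz, hdqz'⟩ : ∃ r : ℝ, dist q z = r := ⟨_, rfl⟩
  have f1 : ivq - ivy = τ + c := by
    rw [← hivq, ← hivy, ← inner_sub_right, hqy', inner_add_right, real_inner_smul_right,
      real_inner_self_eq_norm_sq, hv, hc]
    ring
  have f2 : dqy ^ 2 ≤ (τ + c) ^ 2 + Δ ^ 2 := by
    have hexp : ‖q - y‖ ^ 2 = ‖p - y‖ ^ 2 + 2 * (τ * c) + τ ^ 2 := by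
      rw [hqy', norm_add_sq_real, real_inner_smul_right, real_inner_comm, hc,
        norm_smul, hv, mul_one, Real.norm_eq_abs, sq_abs]
    have h1 : ‖p - y‖ ^ 2 ≤ Δ ^ 2 := by nlinarith [norm_nonneg (p - y), hpy, hΔpos]
    have h2 : dqy ^ 2 = ‖q - y‖ ^ 2 := by rw [← hdqy', dist_eq_norm]
    have h3 : c ^ 2 ≥ 0 := sq_nonneg c
    nlinarith [hexp, h1, h2, h3]
  have hdqy0 : 0 ≤ dqy := hdqy' ▸ dist_nonneg
  have f3 : ivq - ivz ≤ dqz := by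
    rw [← hivq, ← hivz, ← inner_sub_right, ← hdqz', dist_eq_norm]
    calc ⟪v, q - z⟫ ≤ ‖v‖ * ‖q - z‖ := real_inner_le_norm v (q - z)
    _ = ‖q - z‖ := by rw [hv, one_mul]
  have f4 : dqz ≤ (1 + δ) * dqy := by
    have hδ0 : 0 ≤ δ := by rw [hδ]; positivity
    have hinf : Metric.infDist q (P : Set (EuclideanSpace ℝ (Fin d))) ≤ dist q y :=
      Metric.infDist_le_dist_of_mem hyP
    rw [← hdqz', ← hdqy']
    exact le_trans hz (mul_le_mul_of_nonneg_left hinf (by linarith))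
  have hcl : -Δ ≤ c := (abs_le.1 hcb).1
  have hcu : c ≤ Δ := (abs_le.1 hcb).2
  rw [hivy, hivz]
  exact arith_core ε Δ Δ' δ τ c dqy dqz ivq ivy ivz hε0 hε1 hΔpos hΔ'1 hΔ'2 hδ hτε hτpos
    hcl hcu f1 f2 hdqy0 f3 f4
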